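/- Let s₊, s₋, t₊, t₋ be nonzero vectors in ℝ⁴. There exists a real 4×4 matrix A with det A = 1, A·s₊ = t₊, and Aᵀ·t₋ = s₋ (equivalently (Aᵀ)⁻¹·s₋ = t₋) if and only if s₋ · s₊ = t₋ · t₊, where · denotes the standard dot product. Consequently the orbits of Spin(3,3) ≅ SL(4,ℝ) on pairs of nonzero half-spinors (s₊, s₋) ∈ ℝ⁴ ⊕ ℝ⁴ are exactly the level sets of the pairing λ = s₋ᵀ s₊. -/

import Mathlib

open Matrix

noncomputable section SpinAux

/-- The dot-product-with-`f` linear functional. -/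
def dpl (f : Fin 4 → ℝ) : (Fin 4 → ℝ) →ₗ[ℝ] ℝ where
  toFun x := f ⬝ᵥ x
  map_add' x y := by simp [dotProduct_add]
  map_smul' c x := by simp [dotProduct_smul]

@[simp] lemma dpl_apply (f x : Fin 4 → ℝ) : dpl f x = f ⬝ᵥ x := rfl

/-- Canonical covector form depending only on the pairing value. -/
def canonVec (l : ℝ) : Fin 4 → ℝ := if l = 0 then Pi.single 1 1 else Pi.single 0 l

lemma canonVec_three (l : ℝ) : canonVec l 3 = 0 := by
  unfold canonVec
  split <;> simp [Pi.single_apply]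

lemma exists_cols (v f : Fin 4 → ℝ) (hv : v ≠ 0) (hf : f ≠ 0) :
    ∃ c : Fin 4 → (Fin 4 → ℝ), LinearIndependent ℝ c ∧ c 0 = v ∧
      ∀ i, f ⬝ᵥ c i = canonVec (f ⬝ᵥ v) i := by
  obtain ⟨j, hj⟩ : ∃ j, f j ≠ 0 := by
    by_contra h; push_neg at h; exact hf (funext fun j => h j)
  have hφ : dpl f ≠ 0 := by
    intro h
    apply hj
    have := congrArg (fun ψ : (Fin 4 → ℝ) →ₗ[ℝ] ℝ => ψ (Pi.single j 1)) h
    simpa [dotProduct_single] using this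
  by_cases hl : f ⬝ᵥ v = 0
  · -- pairing zero : columns v, w, and a basis of ker f ⊓ ker g
    obtain ⟨l, hlv⟩ : ∃ l, v l ≠ 0 := by
      by_contra h; push_neg at h; exact hv (funext fun l => h l)
    set w : Fin 4 → ℝ := (f j)⁻¹ • (Pi.single j 1 : Fin 4 → ℝ) with hwdef
    have hw : f ⬝ᵥ w = 1 := by
      simp [hwdef, dotProduct_smul, dotProduct_single, inv_mul_cancel₀ hj]
    set g : Fin 4 → ℝ := (v l)⁻¹ • (Pi.single l 1 : Fin 4 → ℝ) with hgdef
    have hgv : g ⬝ᵥ v = 1 := by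
      simp [hgdef, smul_dotProduct, single_dotProduct, inv_mul_cancel₀ hlv]
    set Φ := (dpl f).prod (dpl g) with hΦ
    have hsurj : Function.Surjective Φ := by
      rintro ⟨a, b⟩
      refine ⟨a • w + (b - a * (g ⬝ᵥ w)) • v, ?_⟩
      simp only [hΦ, LinearMap.prod_apply, Function.prod, dpl_apply, dotProduct_add,
        dotProduct_smul, smul_eq_mul, hw, hgv, hl, Prod.mk.injEq]
      constructor <;> ring
    have h2 : Module.finrank ℝ (LinearMap.ker Φ) = 2 := by
      have h := LinearMap.finrank_range_add_finrank_ker Φ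
      rw [LinearMap.range_eq_top.mpr hsurj] at h
      simp [Module.finrank_fin_fun] at h
      omega
    set k := Module.finBasisOfFinrankEq ℝ _ h2 with hk
    have hked : ∀ i, ((k i : Fin 4 → ℝ) ∈ LinearMap.ker (dpl f) ∧
        (k i : Fin 4 → ℝ) ∈ LinearMap.ker (dpl g)) := by
      intro i
      have h' : ((dpl f).prod (dpl g)) (k i : Fin 4 → ℝ) = 0 := (k i).2
      rw [LinearMap.prod_apply] at h'
      have h1 : dpl f (k i : Fin 4 → ℝ) = 0 := congrArg Prod.fst h'
      have h2 : dpl g (k i : Fin 4 → ℝ) = 0 := congrArg Prod.snd h'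
      exact ⟨LinearMap.mem_ker.mpr h1, LinearMap.mem_ker.mpr h2⟩
    have hspanf : Submodule.span ℝ (Set.range fun i => (k i : Fin 4 → ℝ)) ≤
        LinearMap.ker (dpl f) := by
      rw [Submodule.span_le]; rintro x ⟨i, rfl⟩; exact (hked i).1
    have hspang : Submodule.span ℝ (Set.range fun i => (k i : Fin 4 → ℝ)) ≤
        LinearMap.ker (dpl g) := by
      rw [Submodule.span_le]; rintro x ⟨i, rfl⟩; exact (hked i).2
    refine ⟨Fin.cons v (Fin.cons w fun i => (k i : Fin 4 → ℝ)), ?_, Fin.cons_zero _ _, ?_⟩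
    · refine linearIndependent_fin_cons.mpr ⟨linearIndependent_fin_cons.mpr ⟨?_, ?_⟩, ?_⟩
      · exact k.linearIndependent.map' (LinearMap.ker Φ).subtype (Submodule.ker_subtype _)
      · intro hmem
        have : dpl f w = 0 := hspanf hmem
        simp [hw] at this
      · intro hmem
        rw [Fin.range_cons] at hmem
        obtain ⟨a, z, hz, hvz⟩ := Submodule.mem_span_insert.mp hmem
        have hfz : f ⬝ᵥ z = 0 := hspanf hz
        have hgz : g ⬝ᵥ z = 0 := hspang hz
        have ha : a = 0 := by
          have := congrArg (fun x => f ⬝ᵥ x) hvz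
          have h0 := this
          simp [dotProduct_add, dotProduct_smul, hw, hfz, hl] at h0
          exact h0.symm
        have := congrArg (fun x => g ⬝ᵥ x) hvz
        rw [ha] at this
        simp [dotProduct_add, dotProduct_smul, hgz, hgv] at this
    · intro i
      refine Fin.cases ?_ (fun j1 => ?_) i
      · simp [hl, canonVec, Pi.single_apply]
      · refine Fin.cases ?_ (fun j2 => ?_) j1
        · rw [Fin.cons_succ, Fin.cons_zero, hw]
          simp [canonVec, hl, Pi.single_apply, show ((0 : Fin 3).succ : Fin 4) = 1 by rfl]
        · rw [Fin.cons_succ, Fin.cons_succ]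
          have : f ⬝ᵥ (k j2 : Fin 4 → ℝ) = 0 := (hked j2).1
          rw [this]
          have hne : (j2.succ.succ : Fin 4) ≠ 1 := by
            rw [Fin.ne_iff_vne, Fin.val_succ, Fin.val_succ]
            show (j2 : ℕ) + 1 + 1 ≠ 1
            omega
          simp [canonVec, hl, Pi.single_apply, hne]
  · -- pairing nonzero : columns v and a basis of ker f
    have h3 : Module.finrank ℝ (LinearMap.ker (dpl f)) = 3 := by
      have h := Module.Dual.finrank_ker_add_one_of_ne_zero hφ
      simp [Module.finrank_fin_fun] at h
      omega
    set k := Module.finBasisOfFinrankEq ℝ _ h3 with hk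
    have hspanf : Submodule.span ℝ (Set.range fun i => (k i : Fin 4 → ℝ)) ≤
        LinearMap.ker (dpl f) := by
      rw [Submodule.span_le]; rintro x ⟨i, rfl⟩; exact (k i).2
    refine ⟨Fin.cons v fun i => (k i : Fin 4 → ℝ), ?_, Fin.cons_zero _ _, ?_⟩
    · refine linearIndependent_fin_cons.mpr ⟨?_, ?_⟩
      · exact k.linearIndependent.map' (LinearMap.ker (dpl f)).subtype (Submodule.ker_subtype _)
      · intro hmem
        exact hl (hspanf hmem)
    · intro i
      refine Fin.cases ?_ (fun j1 => ?_) i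
      · simp [canonVec, hl]
      · rw [Fin.cons_succ]
        have : f ⬝ᵥ (k j1 : Fin 4 → ℝ) = 0 := (k j1).2
        rw [this]
        simp [canonVec, hl, Pi.single_apply, Fin.succ_ne_zero]

lemma exists_reduce (v f : Fin 4 → ℝ) (hv : v ≠ 0) (hf : f ≠ 0) :
    ∃ B : Matrix (Fin 4) (Fin 4) ℝ, B.det = 1 ∧ B *ᵥ Pi.single 0 1 = v ∧
      Bᵀ *ᵥ f = canonVec (f ⬝ᵥ v) := by
  obtain ⟨c, hind, hc0, hcf⟩ := exists_cols v f hv hf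
  set M : Matrix (Fin 4) (Fin 4) ℝ := Matrix.of c with hM
  have hu : IsUnit M := linearIndependent_rows_iff_isUnit.mp hind
  have hd : M.det ≠ 0 := ((isUnit_iff_isUnit_det M).mp hu).ne_zero
  set N := M.updateRow 3 ((M.det)⁻¹ • c 3) with hN
  have hdet : N.det = 1 := by
    rw [hN, det_updateRow_smul]
    have : M.updateRow 3 (c 3) = M := M.updateRow_eq_self 3
    rw [this, inv_mul_cancel₀ hd]
  have hrow : ∀ i : Fin 4, i ≠ 3 → N i = c i := by
    intro i hi
    rw [hN, Matrix.updateRow_ne hi]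
    rfl
  refine ⟨Nᵀ, by rw [det_transpose, hdet], ?_, ?_⟩
  · funext i
    rw [mulVec_single]
    show N 0 i * 1 = v i
    rw [hrow 0 (by decide), hc0, mul_one]
  · rw [transpose_transpose]
    funext i
    show N i ⬝ᵥ f = _
    by_cases hi : i = 3
    · subst hi
      have hN3 : N 3 = M.det⁻¹ • c 3 := by rw [hN, Matrix.updateRow_self]
      rw [hN3, smul_dotProduct, dotProduct_comm (c 3) f, hcf 3, canonVec_three]
      simp
    · rw [hrow i hi, dotProduct_comm (c i) f, hcf i]

end SpinAux

/-- For nonzero half-spinors `s₊, s₋, t₊, t₋ ∈ ℝ⁴`, there is `A ∈ SL(4,ℝ)` with `A s₊ = t₊`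
and `(Aᵀ)⁻¹ s₋ = t₋` (equivalently `Aᵀ t₋ = s₋`) if and only if `s₋ ⬝ s₊ = t₋ ⬝ t₊`:
the orbits of `Spin(3,3) ≅ SL(4,ℝ)` on pairs of nonzero half-spinors are exactly the level
sets of the pairing `λ = s₋ᵀ s₊`. -/
theorem spin33_orbits_on_half_spinor_pairs (sp sm tp tm : Fin 4 → ℝ)
    (hsp : sp ≠ 0) (hsm : sm ≠ 0) (htp : tp ≠ 0) (htm : tm ≠ 0) :
    (∃ A : Matrix (Fin 4) (Fin 4) ℝ, A.det = 1 ∧ A.mulVec sp = tp ∧ Aᵀ.mulVec tm = sm) ↔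
      sm ⬝ᵥ sp = tm ⬝ᵥ tp := by
  constructor
  · rintro ⟨A, -, hAp, hAm⟩
    rw [← hAp, ← hAm, mulVec_transpose, dotProduct_mulVec]
  · intro hpair
    obtain ⟨B, hBdet, hB1, hB2⟩ := exists_reduce sp sm hsp hsm
    obtain ⟨C, hCdet, hC1, hC2⟩ := exists_reduce tp tm htp htm
    have hBu : IsUnit B.det := by rw [hBdet]; exact isUnit_one
    have hCu : IsUnit C.det := by rw [hCdet]; exact isUnit_one
    refine ⟨C * B⁻¹, ?_, ?_, ?_⟩
    · rw [det_mul, hCdet, det_nonsing_inv, hBdet, one_mul]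
      simp
    · rw [← hB1]
      have hcancel : B⁻¹ *ᵥ (B *ᵥ (Pi.single 0 1 : Fin 4 → ℝ)) = Pi.single 0 1 := by
        rw [Matrix.mulVec_mulVec, Matrix.nonsing_inv_mul B hBu, Matrix.one_mulVec]
      rw [← Matrix.mulVec_mulVec, hcancel, hC1]
    · rw [Matrix.transpose_mul, Matrix.transpose_nonsing_inv, ← Matrix.mulVec_mulVec, hC2,
        ← hpair, ← hB2, Matrix.mulVec_mulVec,
        Matrix.nonsing_inv_mul Bᵀ (by rw [det_transpose, hBdet]; exact isUnit_one),
        Matrix.one_mulVec]
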